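/- Let p, q be natural numbers and K an integer, and let B be the list consisting of p copies of −1, q copies of 1, and one copy of K. Then S_B = ([−p, q] ∪ [K − p, K + q]) ∩ ℤ. -/

import Mathlib

/-- The set of all subset sums (sums of sub-multisets) of a list of integers. -/
def subsetSums (B : List ℤ) : Set ℤ := {x | ∃ l : List ℤ, l.Sublist B ∧ l.sum = x}

lemma sum_of_sublist_replicate {l : List ℤ} {n : ℕ} {a : ℤ}
    (h : l.Sublist (List.replicate n a)) : l.sum = l.length * a ∧ l.length ≤ n := by
  constructor
  · rw [List.sum_eq_card_nsmul l a, nsmul_eq_mul]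
    intro x hx
    exact List.eq_of_mem_replicate (h.subset hx)
  · simpa using h.length_le

theorem subsetSums_replicate_with_K (p q : ℕ) (K : ℤ) :
    subsetSums (List.replicate p (-1 : ℤ) ++ List.replicate q (1 : ℤ) ++ [K]) =
      Set.Icc (-(p : ℤ)) (q : ℤ) ∪ Set.Icc (K - (p : ℤ)) (K + (q : ℤ)) := by
  ext x
  constructor
  · rintro ⟨l, hl, rfl⟩
    rw [List.sublist_append_iff] at hl
    obtain ⟨l12, l3, rfl, hl12, hl3⟩ := hl
    rw [List.sublist_append_iff] at hl12
    obtain ⟨l1, l2, rfl, hl1, hl2⟩ := hl12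
    obtain ⟨hs1, hn1⟩ := sum_of_sublist_replicate hl1
    obtain ⟨hs2, hn2⟩ := sum_of_sublist_replicate hl2
    have h3 : l3 = [] ∨ l3 = [K] := by
      cases hl3 with
      | cons _ h => left; simpa using (List.sublist_nil.mp h)
      | cons_cons _ h => right; simp [(List.sublist_nil.mp h)]
    have hn1' : (l1.length : ℤ) ≤ p := by exact_mod_cast hn1
    have hn2' : (l2.length : ℤ) ≤ q := by exact_mod_cast hn2
    rcases h3 with rfl | rfl
    · left
      simp only [List.sum_append, List.sum_nil, hs1, hs2, Set.mem_Icc]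
      constructor <;> nlinarith [Int.ofNat_nonneg l1.length, Int.ofNat_nonneg l2.length]
    · right
      simp only [List.sum_append, List.sum_cons, List.sum_nil, hs1, hs2, Set.mem_Icc]
      constructor <;> nlinarith [Int.ofNat_nonneg l1.length, Int.ofNat_nonneg l2.length]
  · rintro (⟨h1, h2⟩ | ⟨h1, h2⟩)
    · -- x = b - a with a ≤ p, b ≤ q
      rcases le_or_gt 0 x with hx | hx
      · refine ⟨List.replicate x.toNat 1, ?_, by simp [Int.toNat_of_nonneg hx]⟩
        refine ((List.replicate_sublist_replicate _).2 ?_).trans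
          ((List.sublist_append_right _ _).trans (List.sublist_append_left _ _))
        omega
      · refine ⟨List.replicate (-x).toNat (-1), ?_, ?_⟩
        · refine ((List.replicate_sublist_replicate _).2 ?_).trans
            ((List.sublist_append_left _ _).trans (List.sublist_append_left _ _))
          omega
        · simp; omega
    · rcases le_or_gt K x with hx | hx
      · refine ⟨List.replicate (x - K).toNat 1 ++ [K], ?_, ?_⟩
        · refine List.Sublist.append ?_ (List.Sublist.refl _)
          refine ((List.replicate_sublist_replicate _).2 ?_).trans
            (List.sublist_append_right _ _)
          omega
        · simp; omega
      · refine ⟨List.replicate (K - x).toNat (-1) ++ [K], ?_, ?_⟩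
        · refine List.Sublist.append ?_ (List.Sublist.refl _)
          refine ((List.replicate_sublist_replicate _).2 ?_).trans
            (List.sublist_append_left _ _)
          omega
        · simp; omega
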